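/- Let ℓ > 2 be prime, let H be a dihedral subgroup of PGL₂(𝔽_ℓ) of order 2n with n even, acting on the set Ω of lines in 𝔽_ℓ², and suppose every nontrivial element of H fixes exactly 2 lines. Then no homomorphism χ : H → {±1} satisfying χ(h) = (−1)^{number of h-orbits on Ω} can be surjective. -/

import Mathlib

open Matrix MulAction

variable (ℓ : ℕ) [Fact (Nat.Prime ℓ)]

/-- The group `GL₂(𝔽_ℓ)`. -/
abbrev GL2 := GL (Fin 2) (ZMod ℓ)

/-- The group `PGL₂(𝔽_ℓ)`, the quotient of `GL₂(𝔽_ℓ)` by its center (the scalar matrices). -/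
abbrev PGL2 := GL2 ℓ ⧸ Subgroup.center (GL2 ℓ)

/-- `Ω`, the set of one-dimensional linear subspaces (lines) of `𝔽_ℓ²`. -/
def Line := {W : Submodule (ZMod ℓ) (Fin 2 → ZMod ℓ) // Module.finrank (ZMod ℓ) W = 1}

variable {ℓ}

/-- The natural action of `GL₂(𝔽_ℓ)` on the set of lines of `𝔽_ℓ²`. -/
instance : MulAction (GL2 ℓ) (Line ℓ) where
  smul g W := ⟨W.1.map (Matrix.mulVecLin (g : Matrix (Fin 2) (Fin 2) (ZMod ℓ))), by
    have h1 : ∀ (A : GL2 ℓ) (p : Submodule (ZMod ℓ) (Fin 2 → ZMod ℓ)),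
        Module.finrank (ZMod ℓ) (p.map (Matrix.mulVecLin (A : Matrix (Fin 2) (Fin 2) (ZMod ℓ))))
          ≤ Module.finrank (ZMod ℓ) p :=
      fun A p => Submodule.finrank_map_le _ _
    have h2 := h1 g⁻¹ (W.1.map (Matrix.mulVecLin (g : Matrix (Fin 2) (Fin 2) (ZMod ℓ))))
    rw [← Submodule.map_comp, ← Matrix.mulVecLin_mul] at h2
    have h0 : ((g⁻¹ : GL2 ℓ) : Matrix (Fin 2) (Fin 2) (ZMod ℓ))
        * (g : Matrix (Fin 2) (Fin 2) (ZMod ℓ)) = 1 := by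
      rw [← Units.val_mul, inv_mul_cancel, Units.val_one]
    rw [h0, Matrix.mulVecLin_one, Submodule.map_id] at h2
    have h3 := h1 g W.1
    have h4 := W.2
    omega⟩
  one_smul W := by
    apply Subtype.ext
    show Submodule.map _ _ = _
    simp
  mul_smul g h W := by
    apply Subtype.ext
    show Submodule.map _ _ = Submodule.map _ (Submodule.map _ _)
    rw [← Submodule.map_comp, Units.val_mul, Matrix.mulVecLin_mul]

instance : Finite (Line ℓ) := by
  have : Finite (Submodule (ZMod ℓ) (Fin 2 → ZMod ℓ)) :=
    Finite.of_injective (fun W => (W : Set (Fin 2 → ZMod ℓ))) SetLike.coe_injective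
  exact Subtype.finite

/-- The sign of `g ∈ GL₂(𝔽_ℓ)` as a permutation of the set of lines of `𝔽_ℓ²`.  Since the
scalar matrices act trivially on lines, this is also the sign `σ(h)` of the image `h` of `g`
in `PGL₂(𝔽_ℓ)` acting on the lines. -/
noncomputable def lineSign (g : GL2 ℓ) : ℤˣ :=
  letI : Fintype (Line ℓ) := Fintype.ofFinite _
  letI : DecidableEq (Line ℓ) := Classical.decEq _
  Equiv.Perm.sign (MulAction.toPerm g : Equiv.Perm (Line ℓ))

/-- The image of a subgroup of `GL₂(𝔽_ℓ)` in `PGL₂(𝔽_ℓ)`. -/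
def pglImage (G : Subgroup (GL2 ℓ)) : Subgroup (PGL2 ℓ) :=
  G.map (QuotientGroup.mk' (Subgroup.center (GL2 ℓ)))


lemma two_mul_card_orbits {G : Type*} [Group G] {α : Type*} [Finite α] [MulAction G α]
    (g : G) (h2 : ∀ x : α, g • g • x = x) :
    2 * Nat.card (orbitRel.Quotient (Subgroup.zpowers g) α) =
      Nat.card α + Nat.card {x : α // g • x = x} := by
  classical
  letI : Fintype α := Fintype.ofFinite α
  set σ : Equiv.Perm α := MulAction.toPerm g with hσdef
  have hσ2 : σ ^ 2 = 1 := by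
    ext x
    simpa [sq, hσdef] using h2 x
  have hzpow : ∀ k : ℤ, σ ^ k = 1 ∨ σ ^ k = σ := by
    intro k
    have hk : k = k % 2 + 2 * (k / 2) := by omega
    have : σ ^ k = σ ^ (k % 2) := by
      rw [hk, _root_.zpow_add, _root_.zpow_mul]
      norm_cast
      rw [hσ2]
      simp
    rcases (by omega : k % 2 = 0 ∨ k % 2 = 1) with h | h <;> rw [this, h]
    · left; simp
    · right; simp
  have hgk : ∀ (k : ℤ) (x : α), g ^ k • x = (σ ^ k) x := by
    intro k x
    have h := map_zpow (MulAction.toPermHom G α) g k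
    rw [hσdef, ← MulAction.toPermHom_apply, ← h]
    rfl
  have horb : ∀ x : α, orbit (Subgroup.zpowers g) x = {x, g • x} := by
    intro x
    ext y
    constructor
    · rintro ⟨⟨u, k, rfl⟩, rfl⟩
      show (g ^ k) • x ∈ ({x, g • x} : Set α)
      rw [hgk]
      rcases hzpow k with h | h <;> rw [h] <;> simp [hσdef]
    · intro hy
      rw [Set.mem_insert_iff, Set.mem_singleton_iff] at hy
      rcases hy with rfl | rfl
      · exact mem_orbit_self y
      · exact mem_orbit x (⟨g, Subgroup.mem_zpowers g⟩ : Subgroup.zpowers g)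
  set Ω := orbitRel.Quotient (Subgroup.zpowers g) α
  letI : Fintype Ω := Fintype.ofFinite Ω
  have horbcard : ∀ ω : Ω, Nat.card ω.orbit + (if Nat.card ω.orbit = 1 then 1 else 0) = 2 := by
    intro ω
    have h1 : ω.orbit = orbit (Subgroup.zpowers g) ω.out :=
      orbitRel.Quotient.orbit_eq_orbit_out ω Quotient.out_eq'
    rw [h1, horb]
    by_cases hx : g • ω.out = ω.out
    · rw [hx]
      simp [Nat.card_coe_set_eq]
    · rw [Nat.card_coe_set_eq, Set.ncard_pair (Ne.symm hx)]
      simp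
  have hfixequiv : Nat.card {ω : Ω // Nat.card ω.orbit = 1} = Nat.card {x : α // g • x = x} := by
    apply Nat.card_congr
    symm
    apply Equiv.ofBijective (f := fun x : {x : α // g • x = x} =>
      (⟨Quotient.mk'' x.1, by
        rw [orbitRel.Quotient.orbit_mk, horb, x.2, Set.pair_eq_singleton,
          Nat.card_coe_set_eq, Set.ncard_singleton]⟩ : {ω : Ω // Nat.card ω.orbit = 1}))
    constructor
    · rintro ⟨x, hx⟩ ⟨y, hy⟩ h
      have : x ∈ orbit (Subgroup.zpowers g) y :=
        orbitRel_apply.mp (Quotient.eq''.mp (Subtype.ext_iff.mp h))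
      rw [horb, hy] at this
      simpa [Subtype.ext_iff] using this.elim id id
    · rintro ⟨ω, hω⟩
      have h1 : ω.orbit = orbit (Subgroup.zpowers g) ω.out :=
        orbitRel.Quotient.orbit_eq_orbit_out ω Quotient.out_eq'
      have hfix : g • ω.out = ω.out := by
        by_contra hx
        rw [h1, horb, Nat.card_coe_set_eq, Set.ncard_pair (Ne.symm hx)] at hω
        omega
      exact ⟨⟨ω.out, hfix⟩, by simp [Subtype.ext_iff, Quotient.out_eq']⟩
  have hsum : Nat.card α = ∑ ω : Ω, Nat.card ω.orbit := by
    rw [Nat.card_congr (selfEquivSigmaOrbits' (Subgroup.zpowers g) α),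
      Nat.card_eq_fintype_card, Fintype.card_sigma]
    congr 1
    ext ω
    rw [Nat.card_eq_fintype_card]
  have hite : ∑ ω : Ω, (if Nat.card ω.orbit = 1 then 1 else 0) =
      Nat.card {ω : Ω // Nat.card ω.orbit = 1} := by
    rw [Nat.card_eq_fintype_card, Fintype.card_subtype]
    rw [Finset.card_filter]
  calc 2 * Nat.card Ω = ∑ _ω : Ω, 2 := by
        rw [Finset.sum_const, Nat.card_eq_fintype_card, smul_eq_mul, mul_comm]
        rfl
    _ = ∑ ω : Ω, (Nat.card ω.orbit + (if Nat.card ω.orbit = 1 then 1 else 0)) :=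
        (Finset.sum_congr rfl fun ω _ => (horbcard ω).symm)
    _ = Nat.card α + Nat.card {x : α // g • x = x} := by
        rw [Finset.sum_add_distrib, hite, hfixequiv, ← hsum]


lemma dihedral_invs (n : ℕ) (hn : Even n) (hn0 : n ≠ 0) :
    ∃ F : Option (ZMod n) → DihedralGroup n, Function.Injective F ∧
      ∀ x, F x ≠ 1 ∧ F x * F x = 1 := by
  haveI : NeZero n := ⟨hn0⟩
  obtain ⟨m, hm⟩ := hn
  have hm2 : n / 2 = m := by omega
  refine ⟨fun x => x.elim (DihedralGroup.r ((n / 2 : ℕ) : ZMod n)) DihedralGroup.sr, ?_, ?_⟩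
  · intro a b hab
    cases a <;> cases b <;> simp_all
  · rintro (_ | i)
    · constructor
      · rw [DihedralGroup.one_def]
        intro hcon
        have h0 : ((n / 2 : ℕ) : ZMod n) = 0 := by
          exact DihedralGroup.r.inj hcon
        rw [ZMod.natCast_eq_zero_iff] at h0
        have := Nat.le_of_dvd (by omega) h0
        omega
      · show DihedralGroup.r _ * DihedralGroup.r _ = 1
        rw [DihedralGroup.r_mul_r, DihedralGroup.one_def, ← Nat.cast_add]
        congr 1
        have h12 : n / 2 + n / 2 = n := by omega
        rw [h12, ZMod.natCast_self]
    · constructor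
      · show DihedralGroup.sr i ≠ 1
        rw [DihedralGroup.one_def]; intro h; cases h
      · show DihedralGroup.sr _ * DihedralGroup.sr _ = 1
        rw [DihedralGroup.sr_mul_sr, sub_self, DihedralGroup.one_def]

lemma center_smul_line {z : GL2 ℓ}
    (hz : z ∈ Subgroup.center (GL2 ℓ)) (W : Line ℓ) : z • W = W := by
  obtain ⟨c, hc⟩ : (z : Matrix (Fin 2) (Fin 2) (ZMod ℓ)) ∈
      Set.range (Matrix.scalar (Fin 2)) := by
    apply Matrix.mem_range_scalar_of_commute_transvectionStruct
    intro t
    have hu := (Subgroup.mem_center_iff.mp hz)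
      ⟨t.toMatrix, t.inv.toMatrix, t.mul_inv, t.inv_mul⟩
    exact congrArg Units.val hu
  have hsc : ∀ v : Fin 2 → ZMod ℓ,
      Matrix.mulVecLin (z : Matrix (Fin 2) (Fin 2) (ZMod ℓ)) v = c • v := by
    intro v
    funext i
    rw [← hc]
    simp [Matrix.mulVecLin_apply, Matrix.scalar_apply, Matrix.mulVec_diagonal]
  have hc0 : c ≠ 0 := by
    intro h0
    have h1 : (z : Matrix (Fin 2) (Fin 2) (ZMod ℓ))
        * ((z⁻¹ : GL2 ℓ) : Matrix (Fin 2) (Fin 2) (ZMod ℓ)) = 1 := by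
      rw [← Units.val_mul, mul_inv_cancel, Units.val_one]
    have h2 := congrFun (congrFun h1 0) 0
    rw [← hc, h0] at h2
    simp [Matrix.mul_apply, Matrix.scalar_apply] at h2
  apply Subtype.ext
  show W.1.map (Matrix.mulVecLin (z : Matrix (Fin 2) (Fin 2) (ZMod ℓ))) = W.1
  ext v
  rw [Submodule.mem_map]
  constructor
  · rintro ⟨w, hw, rfl⟩
    rw [hsc]
    exact W.1.smul_mem c hw
  · intro hv
    exact ⟨c⁻¹ • v, W.1.smul_mem _ hv, by
      rw [hsc, smul_smul, mul_inv_cancel₀ hc0, one_smul]⟩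

/-- Let `ℓ > 2` be prime and `H` a dihedral subgroup of `PGL₂(𝔽_ℓ)` of order `2n` with `n`
even such that every nontrivial element of `H` fixes exactly 2 lines (fixed lines and orbits
of `h ∈ PGL₂(𝔽_ℓ)` are computed via any lift `g ∈ GL₂(𝔽_ℓ)`, which induces the same
permutation of lines).  Then no homomorphism `χ : H → {±1}` with
`χ(h) = (-1)^(number of h-orbits on lines)` is surjective. -/
theorem stmt18 (ℓ n : ℕ) [Fact (Nat.Prime ℓ)] (hl : 2 < ℓ) (hn : Even n)
    (H : Subgroup (PGL2 ℓ)) (hdih : Nonempty (↥H ≃* DihedralGroup n))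
    (hfix : ∀ h ∈ H, h ≠ 1 → ∀ g : GL2 ℓ, (g : PGL2 ℓ) = h →
      Nat.card {W : Line ℓ // g • W = W} = 2) :
    ∀ χ : ↥H →* ℤˣ,
      (∀ (h : ↥H) (g : GL2 ℓ), (g : PGL2 ℓ) = (h : PGL2 ℓ) →
        χ h = (-1 : ℤˣ) ^
          Nat.card (MulAction.orbitRel.Quotient (Subgroup.zpowers g) (Line ℓ))) →
      ¬ Function.Surjective χ := by
  intro χ hχ hsurj
  haveI : Finite (PGL2 ℓ) := Quotient.finite _
  obtain ⟨e⟩ := hdih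
  have hcardH : Nat.card ↥H = 2 * n := by
    rw [Nat.card_congr e.toEquiv, DihedralGroup.nat_card]
  have hn0 : n ≠ 0 := by
    intro h0
    rw [h0, mul_zero] at hcardH
    have := Nat.card_pos (α := ↥H)
    omega
  haveI : NeZero n := ⟨hn0⟩
  set N := Nat.card (Line ℓ) with hNdef
  have hval : ∀ h : ↥H, h ≠ 1 → h * h = 1 → χ h = (-1 : ℤˣ) ^ ((N + 2) / 2) := by
    intro h hh1 hhsq
    obtain ⟨g, hg⟩ := QuotientGroup.mk_surjective ((h : PGL2 ℓ))
    have hg' : (g : PGL2 ℓ) = (h : PGL2 ℓ) := hg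
    have hcen : g * g ∈ Subgroup.center (GL2 ℓ) := by
      rw [← QuotientGroup.eq_one_iff]
      have heq : ((g * g : GL2 ℓ) : PGL2 ℓ) = ((h * h : ↥H) : PGL2 ℓ) := by
        rw [Subgroup.coe_mul, ← hg']
        rfl
      rw [heq, hhsq, OneMemClass.coe_one]
    have hg2 : ∀ W : Line ℓ, g • g • W = W := by
      intro W
      rw [← mul_smul]
      exact center_smul_line hcen W
    have hfix2 : Nat.card {W : Line ℓ // g • W = W} = 2 :=
      hfix (h : PGL2 ℓ) h.2 (by simpa using hh1) g hg'
    have horb := two_mul_card_orbits g hg2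
    rw [hfix2] at horb
    have hhalf : Nat.card (MulAction.orbitRel.Quotient (Subgroup.zpowers g) (Line ℓ))
        = (N + 2) / 2 := by omega
    rw [hχ h g hg', hhalf]
  obtain ⟨F, hFinj, hF⟩ := dihedral_invs n hn hn0
  set f : Option (ZMod n) → ↥H := fun x => e.symm (F x) with hfdef
  have hfinj : Function.Injective f := fun a b hab => hFinj (e.symm.injective hab)
  have hf1 : ∀ x, f x ≠ 1 := by
    intro x hx
    apply (hF x).1
    have h1 : e (f x) = e 1 := congrArg e hx
    rw [_root_.map_one] at h1
    rw [← h1]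
    show F x = e (e.symm (F x))
    rw [MulEquiv.apply_symm_apply]
  have hfsq : ∀ x, f x * f x = 1 := by
    intro x
    show e.symm (F x) * e.symm (F x) = 1
    rw [← _root_.map_mul, (hF x).2, _root_.map_one]
  set c : ℤˣ := (-1 : ℤˣ) ^ ((N + 2) / 2) with hcdef
  have hfval : ∀ x, χ (f x) = c := fun x => hval _ (hf1 x) (hfsq x)
  have hker : Nat.card χ.ker = n := by
    have h1 := Subgroup.card_eq_card_quotient_mul_card_subgroup χ.ker
    have h2 : Nat.card (↥H ⧸ χ.ker) = 2 := by
      rw [Nat.card_congr (QuotientGroup.quotientKerEquivOfSurjective χ hsurj).toEquiv,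
        Nat.card_eq_fintype_card]
      decide
    rw [hcardH, h2] at h1
    omega
  rcases Int.units_eq_one_or c with hc | hc
  · set φ : Option (Option (ZMod n)) → ↥χ.ker := fun x =>
      x.elim 1 (fun y => ⟨f y, by rw [MonoidHom.mem_ker, hfval y, hc]⟩) with hφdef
    have hφinj : Function.Injective φ := by
      intro a b hab
      have hab' : ((φ a : ↥χ.ker) : ↥H) = ((φ b : ↥χ.ker) : ↥H) := congrArg _ hab
      cases a with
      | none =>
        cases b with
        | none => rfl
        | some y => exact absurd hab'.symm (hf1 y)
      | some y =>
        cases b with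
        | none => exact absurd hab' (hf1 y)
        | some z => exact congrArg some (hfinj hab')
    have hle := Nat.card_le_card_of_injective φ hφinj
    rw [hker, Finite.card_option, Finite.card_option, Nat.card_zmod] at hle
    omega
  · classical
    letI : Fintype ↥H := Fintype.ofFinite _
    have hsplit : Nat.card {h : ↥H // χ h = 1} + Nat.card {h : ↥H // ¬ χ h = 1} = 2 * n := by
      rw [← hcardH, Nat.card_eq_fintype_card, Nat.card_eq_fintype_card,
        Nat.card_eq_fintype_card, ← Fintype.card_sum]
      exact Fintype.card_congr (Equiv.sumCompl _)
    have hker' : Nat.card {h : ↥H // χ h = 1} = n := by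
      rw [← hker]
      exact Nat.card_congr (Equiv.subtypeEquivRight fun h => Iff.symm MonoidHom.mem_ker)
    have hTcard : Nat.card {h : ↥H // ¬ χ h = 1} = n := by omega
    have hφinj : Function.Injective (fun x : Option (ZMod n) =>
        (⟨f x, by rw [hfval x, hc]; decide⟩ : {h : ↥H // ¬ χ h = 1})) := by
      intro a b hab
      exact hfinj (congrArg Subtype.val hab)
    have hle := Nat.card_le_card_of_injective _ hφinj
    rw [hTcard, Finite.card_option, Nat.card_zmod] at hle
    omega
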